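/- arXiv:1902.04375 — 4 statements merged into one kernel-verified Lean document; each statement's English description precedes it below -/
import Mathlib

section
/- Subgradient Newton step decreases to root: let t : ℝ → ℝ be convex, continuous, strictly decreasing on the interval of interest, with t(λ⁰) > 0 at the starting point λ⁰ and a root λ* > λ⁰ (t(λ*) = 0). If g < 0 is a subgradient of t at λ⁰, then the Newton iterate λ¹ = λ⁰ - t(λ⁰)/g satisfies λ⁰ < λ¹ ≤ λ*, and t(λ¹) ≥ 0. -/
/-- Subgradient Newton step: if t is convex, continuous and strictly decreasing
on [λ⁰, λ*], with t(λ⁰) > 0, root λ* > λ⁰, and g < 0 a subgradient of t at λ⁰,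
then the Newton iterate λ¹ = λ⁰ - t(λ⁰)/g satisfies λ⁰ < λ¹ ≤ λ* and t(λ¹) ≥ 0. -/
theorem stmt_7 (t : ℝ → ℝ) (lam0 lamStar g : ℝ)
    (hconv : ConvexOn ℝ Set.univ t) (hcont : Continuous t)
    (hstrict : StrictAntiOn t (Set.Icc lam0 lamStar))
    (hsub : ∀ μ : ℝ, t lam0 + g * (μ - lam0) ≤ t μ)
    (hg : g < 0) (ht0 : 0 < t lam0)
    (hlt : lam0 < lamStar) (hroot : t lamStar = 0) :
    lam0 < lam0 - t lam0 / g ∧ lam0 - t lam0 / g ≤ lamStar ∧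
    0 ≤ t (lam0 - t lam0 / g) := by
  have h1 : lam0 < lam0 - t lam0 / g := by
    have : t lam0 / g < 0 := div_neg_of_pos_of_neg ht0 hg
    linarith
  have h2 : lam0 - t lam0 / g ≤ lamStar := by
    have := hsub lamStar
    rw [hroot] at this
    -- t lam0 + g*(lamStar - lam0) ≤ 0
    have hts : t lam0 ≤ g * (lam0 - lamStar) := by linarith [this]
    have : t lam0 / g ≥ lam0 - lamStar := by
      rw [ge_iff_le, le_div_iff_of_neg hg]
      linarith [hts]
    linarith
  have h3 : 0 ≤ t (lam0 - t lam0 / g) := by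
    have := hsub (lam0 - t lam0 / g)
    have hcalc : g * (lam0 - t lam0 / g - lam0) = - t lam0 := by
      field_simp [hg.ne]
      ring
    linarith [this, hcalc.ge, hcalc.le]
  exact ⟨h1, h2, h3⟩
end

section
/- If (ŷ, v̂) is an optimal solution of the LP min{d^T y - v^T k' : B y - K_ψ^T v ≥ b, K_s^T v ≤ 𝟙, y,v ≥ 0} with optimal value 𝔒, and (ψ̂, û, ŵ) is feasible for max{ψ^T p + u^T q - 𝔒 w : B^T ψ + G^T u ≤ d w + c, ψ,u,w ≥ 0}, then the point (ψ̂, û, ŵ, ŵ ŷ, ŵ v̂) is feasible for the combined LP max{ψ^T p + u^T q - (d^T y - v^T k') : B y - K_ψ^T v ≥ b w, B^T ψ + G^T u ≤ d w + c, K_s^T v ≤ 𝟙 w, ψ,u,w,y,v ≥ 0} and achieves the same objective value as (ψ̂, û, ŵ) does in its problem. -/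
open Matrix

/-- Combining subproblem solutions: if (ŷ, v̂) is optimal for the first
subproblem with value 𝔒 = dᵀŷ - v̂ᵀk', and (ψ̂, û, ŵ) is feasible for the
second subproblem, then (ψ̂, û, ŵ, ŵŷ, ŵv̂) is feasible for the combined
Benders subproblem and achieves the same objective value. -/
theorem stmt_8 {m n n2 pp qq : ℕ}
    (B : Matrix (Fin m) (Fin n) ℝ) (G : Matrix (Fin n2) (Fin n) ℝ)
    (Kψ : Matrix (Fin pp) (Fin m) ℝ) (Ks : Matrix (Fin pp) (Fin qq) ℝ)
    (b : Fin m → ℝ) (c d : Fin n → ℝ) (p : Fin m → ℝ) (q : Fin n2 → ℝ)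
    (k' : Fin pp → ℝ) (one : Fin qq → ℝ)
    (yHat : Fin n → ℝ) (vHat : Fin pp → ℝ) (𝔒 : ℝ)
    (ψHat : Fin m → ℝ) (uHat : Fin n2 → ℝ) (wHat : ℝ)
    -- (ŷ, v̂) optimal for the first subproblem with value 𝔒
    (hy1 : b ≤ B *ᵥ yHat - Kψ.transpose *ᵥ vHat)
    (hy2 : Ks.transpose *ᵥ vHat ≤ one)
    (hy3 : 0 ≤ yHat) (hy4 : 0 ≤ vHat)
    (hOval : d ⬝ᵥ yHat - vHat ⬝ᵥ k' = 𝔒)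
    (hyopt : ∀ (y : Fin n → ℝ) (v : Fin pp → ℝ),
      b ≤ B *ᵥ y - Kψ.transpose *ᵥ v → Ks.transpose *ᵥ v ≤ one → 0 ≤ y → 0 ≤ v →
      𝔒 ≤ d ⬝ᵥ y - v ⬝ᵥ k')
    -- (ψ̂, û, ŵ) feasible for the second subproblem
    (hψ1 : B.transpose *ᵥ ψHat + G.transpose *ᵥ uHat ≤ wHat • d + c)
    (hψ2 : 0 ≤ ψHat) (hψ3 : 0 ≤ uHat) (hψ4 : 0 ≤ wHat) :
    -- feasibility of (ψ̂, û, ŵ, ŵŷ, ŵv̂) in the combined problem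
    (wHat • b ≤ B *ᵥ (wHat • yHat) - Kψ.transpose *ᵥ (wHat • vHat) ∧
      B.transpose *ᵥ ψHat + G.transpose *ᵥ uHat ≤ wHat • d + c ∧
      Ks.transpose *ᵥ (wHat • vHat) ≤ wHat • one ∧
      0 ≤ ψHat ∧ 0 ≤ uHat ∧ 0 ≤ wHat ∧ 0 ≤ wHat • yHat ∧ 0 ≤ wHat • vHat) ∧
    -- value preservation
    ψHat ⬝ᵥ p + uHat ⬝ᵥ q - (d ⬝ᵥ (wHat • yHat) - (wHat • vHat) ⬝ᵥ k')
      = ψHat ⬝ᵥ p + uHat ⬝ᵥ q - 𝔒 * wHat := by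
  refine ⟨⟨?_, hψ1, ?_, hψ2, hψ3, hψ4, smul_nonneg hψ4 hy3, smul_nonneg hψ4 hy4⟩, ?_⟩
  · rw [Matrix.mulVec_smul, Matrix.mulVec_smul, ← smul_sub]
    exact smul_le_smul_of_nonneg_left hy1 hψ4
  · rw [Matrix.mulVec_smul]
    exact smul_le_smul_of_nonneg_left hy2 hψ4
  · rw [dotProduct_smul, smul_dotProduct, smul_eq_mul, smul_eq_mul,
      ← mul_sub, hOval.symm, mul_comm]
end

section
/- In the special case d = c (Corollary on sequence-independent decomposition): for the problem max{ψ^T p + u^T q - 𝔒 w : B^T ψ + G^T u ≤ c(w + 1), ψ,u,w ≥ 0}, if the restricted problem with w = 0, namely max{ψ^T p + u^T q : B^T ψ + G^T u ≤ c, ψ,u ≥ 0}, has a finite optimum 𝔒' attained at (ψ̂, û) with 𝔒' > 𝔒, then the unrestricted problem is unbounded: (ψ̂, û, 1) is an unbounded ray direction after the substitution (ψ,u) = ((w+1)ψ', (w+1)u'). -/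
open Matrix

/-- Special case d = c: if the restricted problem (w = 0) has finite optimum
𝔒' attained at (ψ̂, û) and 𝔒' > 𝔒, then the problem
max{ψᵀp + uᵀq - 𝔒w : Bᵀψ + Gᵀu ≤ c(w+1), ψ,u,w ≥ 0} is unbounded. -/
theorem stmt_12 {m n k : ℕ}
    (B : Matrix (Fin m) (Fin k) ℝ) (G : Matrix (Fin n) (Fin k) ℝ)
    (c : Fin k → ℝ) (p : Fin m → ℝ) (q : Fin n → ℝ) (𝔒 𝔒' : ℝ)
    (ψHat : Fin m → ℝ) (uHat : Fin n → ℝ)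
    (hfeas : B.transpose *ᵥ ψHat + G.transpose *ᵥ uHat ≤ c)
    (hψ : 0 ≤ ψHat) (hu : 0 ≤ uHat)
    (hval : ψHat ⬝ᵥ p + uHat ⬝ᵥ q = 𝔒')
    (hopt : ∀ (ψ : Fin m → ℝ) (u : Fin n → ℝ),
      B.transpose *ᵥ ψ + G.transpose *ᵥ u ≤ c → 0 ≤ ψ → 0 ≤ u →
      ψ ⬝ᵥ p + u ⬝ᵥ q ≤ 𝔒')
    (hgt : 𝔒 < 𝔒') :
    ∀ M : ℝ, ∃ (ψ : Fin m → ℝ) (u : Fin n → ℝ) (w : ℝ),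
      B.transpose *ᵥ ψ + G.transpose *ᵥ u ≤ (w + 1) • c ∧
      0 ≤ ψ ∧ 0 ≤ u ∧ 0 ≤ w ∧
      M < ψ ⬝ᵥ p + u ⬝ᵥ q - 𝔒 * w := by
  intro M
  set w : ℝ := max 0 ((M - 𝔒') / (𝔒' - 𝔒) + 1) with hw
  have hw0 : 0 ≤ w := le_max_left _ _
  have hw1 : 0 < w + 1 := by linarith
  refine ⟨(w + 1) • ψHat, (w + 1) • uHat, w, ?_, ?_, ?_, hw0, ?_⟩
  · have h := smul_le_smul_of_nonneg_left hfeas hw1.le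
    simpa [Matrix.mulVec_smul, smul_add] using h
  · exact smul_nonneg hw1.le hψ
  · exact smul_nonneg hw1.le hu
  · have hdot : ((w + 1) • ψHat) ⬝ᵥ p + ((w + 1) • uHat) ⬝ᵥ q
        = (w + 1) * 𝔒' := by
      rw [smul_dotProduct, smul_dotProduct, smul_eq_mul, smul_eq_mul, ← mul_add, hval]
    rw [hdot]
    have hkey : (M - 𝔒') / (𝔒' - 𝔒) + 1 ≤ w := le_max_right _ _
    have hd : 0 < 𝔒' - 𝔒 := by linarith
    have : (M - 𝔒') / (𝔒' - 𝔒) < w := by linarith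
    have := (div_lt_iff₀ hd).mp this
    nlinarith
end

section
/- In the special case d = c with 𝔒' ≤ 𝔒: if the restricted problem max{ψ^T p + u^T q : B^T ψ + G^T u ≤ c, ψ,u ≥ 0} has finite optimal value 𝔒' ≤ 𝔒 attained at (ψ̂, û), then (ψ̂, û, 0) is optimal for max{ψ^T p + u^T q - 𝔒 w : B^T ψ + G^T u ≤ c w + c, ψ,u,w ≥ 0}, whose optimal value is 𝔒'. -/
open Matrix

/-- Special case d = c with 𝔒' ≤ 𝔒: if the restricted problem (w = 0) has
finite optimum 𝔒' ≤ 𝔒 attained at (ψ̂, û), then (ψ̂, û, 0) is optimal for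
max{ψᵀp + uᵀq - 𝔒w : Bᵀψ + Gᵀu ≤ cw + c, ψ,u,w ≥ 0}, with value 𝔒'. -/
theorem stmt_13 {m n k : ℕ}
    (B : Matrix (Fin m) (Fin k) ℝ) (G : Matrix (Fin n) (Fin k) ℝ)
    (c : Fin k → ℝ) (p : Fin m → ℝ) (q : Fin n → ℝ) (𝔒 𝔒' : ℝ)
    (ψHat : Fin m → ℝ) (uHat : Fin n → ℝ)
    (hfeas : B.transpose *ᵥ ψHat + G.transpose *ᵥ uHat ≤ c)
    (hψ : 0 ≤ ψHat) (hu : 0 ≤ uHat)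
    (hval : ψHat ⬝ᵥ p + uHat ⬝ᵥ q = 𝔒')
    (hopt : ∀ (ψ : Fin m → ℝ) (u : Fin n → ℝ),
      B.transpose *ᵥ ψ + G.transpose *ᵥ u ≤ c → 0 ≤ ψ → 0 ≤ u →
      ψ ⬝ᵥ p + u ⬝ᵥ q ≤ 𝔒')
    (hle : 𝔒' ≤ 𝔒) :
    -- (ψ̂, û, 0) is feasible with value 𝔒'
    (B.transpose *ᵥ ψHat + G.transpose *ᵥ uHat ≤ (0 : ℝ) • c + c ∧
      ψHat ⬝ᵥ p + uHat ⬝ᵥ q - 𝔒 * 0 = 𝔒') ∧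
    -- and optimal
    (∀ (ψ : Fin m → ℝ) (u : Fin n → ℝ) (w : ℝ),
      B.transpose *ᵥ ψ + G.transpose *ᵥ u ≤ w • c + c → 0 ≤ ψ → 0 ≤ u → 0 ≤ w →
      ψ ⬝ᵥ p + u ⬝ᵥ q - 𝔒 * w ≤ 𝔒') := by
  constructor
  · constructor
    · simpa using hfeas
    · simpa using hval
  · intro ψ u w hf hψ' hu' hw
    have hw1 : (0:ℝ) < w + 1 := by linarith
    set a : ℝ := (w + 1)⁻¹ with ha
    have ha0 : 0 ≤ a := le_of_lt (inv_pos.mpr hw1)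
    have hfeas' : B.transpose *ᵥ (a • ψ) + G.transpose *ᵥ (a • u) ≤ c := by
      intro i
      have h := hf i
      simp only [Matrix.mulVec_smul, Pi.add_apply, Pi.smul_apply, smul_eq_mul]
      have : a * ((B.transpose *ᵥ ψ) i + (G.transpose *ᵥ u) i) ≤ a * ((w + 1) * c i) := by
        apply mul_le_mul_of_nonneg_left _ ha0
        have h' : (Bᵀ *ᵥ ψ) i + (Gᵀ *ᵥ u) i ≤ w * c i + c i := by simpa using h
        linarith
      calc a * (B.transpose *ᵥ ψ) i + a * (G.transpose *ᵥ u) i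
          = a * ((B.transpose *ᵥ ψ) i + (G.transpose *ᵥ u) i) := by ring
        _ ≤ a * ((w + 1) * c i) := this
        _ = c i := by rw [← mul_assoc, inv_mul_cancel₀ (ne_of_gt hw1), one_mul]
    have hψ'' : 0 ≤ a • ψ := smul_nonneg ha0 hψ'
    have hu'' : 0 ≤ a • u := smul_nonneg ha0 hu'
    have hb := hopt (a • ψ) (a • u) hfeas' hψ'' hu''
    rw [smul_dotProduct, smul_dotProduct, smul_eq_mul, smul_eq_mul,
      ← mul_add] at hb
    have key : ψ ⬝ᵥ p + u ⬝ᵥ q ≤ (w + 1) * 𝔒' := by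
      have := mul_le_mul_of_nonneg_left hb (le_of_lt hw1)
      rw [← mul_assoc, mul_inv_cancel₀ (ne_of_gt hw1), one_mul] at this
      linarith
    nlinarith [mul_le_mul_of_nonneg_left hle hw]
end
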